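/- Cascade closure for the α-model: let q₀, N with 1 ≤ q₀ ≤ N, and suppose for indices l, m the folded modes satisfy q̄_l = |l q₀ − L_l(2N+2)| and q̄_m = |m q₀ − L_m(2N+2)| for integers L_l, L_m with q̄_l, q̄_m ∈ [1,N]. If q ∈ [1,N] satisfies q ± q̄_l ± q̄_m ∈ {0, 2N+2} for some choice of signs, then q is congruent to ±(l+m)q₀ or ±(l−m)q₀ modulo 2N+2; hence 2|sin(qπ/(2N+2))| equals 2|sin((l+m)q₀π/(2N+2))| or 2|sin((l−m)q₀π/(2N+2))|. -/
import Mathlib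


open Real

lemma key_sign (D q A B s t : ℤ) (hs : s = 1 ∨ s = -1) (ht : t = 1 ∨ t = -1)
    (h : D ∣ q + s * A + t * B) :
    ∃ ε : ℤ, (ε = 1 ∨ ε = -1) ∧ (D ∣ q - ε * (A + B) ∨ D ∣ q - ε * (A - B)) := by
  rcases hs with rfl | rfl <;> rcases ht with rfl | rfl
  · refine ⟨-1, Or.inr rfl, Or.inl ?_⟩
    have e : q - (-1) * (A + B) = q + 1 * A + 1 * B := by ring
    rw [e]; exact h
  · refine ⟨-1, Or.inr rfl, Or.inr ?_⟩
    have e : q - (-1) * (A - B) = q + 1 * A + (-1) * B := by ring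
    rw [e]; exact h
  · refine ⟨1, Or.inl rfl, Or.inr ?_⟩
    have e : q - 1 * (A - B) = q + (-1) * A + 1 * B := by ring
    rw [e]; exact h
  · refine ⟨1, Or.inl rfl, Or.inl ?_⟩
    have e : q - 1 * (A + B) = q + (-1) * A + (-1) * B := by ring
    rw [e]; exact h

lemma abs_sin_eq_of_dvd (D a b ε : ℤ) (hε : ε = 1 ∨ ε = -1)
    (h : D ∣ a - ε * b) :
    |Real.sin ((a : ℝ) * π / (D : ℝ))| = |Real.sin ((b : ℝ) * π / (D : ℝ))| := by
  by_cases hD : (D : ℝ) = 0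
  · simp [hD]
  obtain ⟨k, hk⟩ := h
  have hk' : ((a : ℝ)) - (ε : ℝ) * b = (D : ℝ) * k := by exact_mod_cast congrArg (Int.cast : ℤ → ℝ) hk
  have harg : (a : ℝ) * π / (D : ℝ) = (ε : ℝ) * ((b : ℝ) * π / D) + (k : ℤ) * π := by
    field_simp
    nlinarith [hk', Real.pi_pos]
  rw [harg, Real.sin_add_int_mul_pi, abs_mul]
  have h1 : |((-1 : ℝ)) ^ k| = 1 := by
    rcases Int.even_or_odd k with he | ho
    · rw [he.neg_one_zpow]; simp
    · rw [Odd.neg_one_zpow ho]; simp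
  rw [h1, one_mul]
  rcases hε with rfl | rfl
  · push_cast; rw [one_mul]
  · push_cast; rw [neg_one_mul, Real.sin_neg, abs_neg]

theorem cascade_closure_alpha
    (N q₀ : ℕ) (hN : 1 ≤ N) (hq01 : 1 ≤ q₀) (hq0N : q₀ ≤ N)
    (l m q Ll Lm qbl qbm : ℤ)
    (hqbl : qbl = |l * (q₀ : ℤ) - Ll * (2 * (N : ℤ) + 2)|)
    (hqbl1 : 1 ≤ qbl) (hqblN : qbl ≤ (N : ℤ))
    (hqbm : qbm = |m * (q₀ : ℤ) - Lm * (2 * (N : ℤ) + 2)|)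
    (hqbm1 : 1 ≤ qbm) (hqbmN : qbm ≤ (N : ℤ))
    (hq1 : 1 ≤ q) (hqN : q ≤ (N : ℤ))
    (hsel : ∃ σ₁ σ₂ : ℤ, (σ₁ = 1 ∨ σ₁ = -1) ∧ (σ₂ = 1 ∨ σ₂ = -1) ∧
      (q + σ₁ * qbl + σ₂ * qbm = 0 ∨ q + σ₁ * qbl + σ₂ * qbm = 2 * (N : ℤ) + 2)) :
    (∃ ε : ℤ, (ε = 1 ∨ ε = -1) ∧
      ((2 * (N : ℤ) + 2) ∣ q - ε * (l + m) * (q₀ : ℤ) ∨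
       (2 * (N : ℤ) + 2) ∣ q - ε * (l - m) * (q₀ : ℤ))) ∧
    (2 * |Real.sin ((q : ℝ) * π / (2 * N + 2))|
        = 2 * |Real.sin (((l + m : ℤ) : ℝ) * q₀ * π / (2 * N + 2))| ∨
     2 * |Real.sin ((q : ℝ) * π / (2 * N + 2))|
        = 2 * |Real.sin (((l - m : ℤ) : ℝ) * q₀ * π / (2 * N + 2))|) := by
  obtain ⟨σ₁, σ₂, hσ₁, hσ₂, hsum⟩ := hsel
  set D : ℤ := 2 * (N : ℤ) + 2 with hD
  -- extract signs from absolute values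
  have hA : ∃ e₁ : ℤ, (e₁ = 1 ∨ e₁ = -1) ∧ qbl = e₁ * (l * (q₀ : ℤ) - Ll * D) := by
    rcases abs_cases (l * (q₀ : ℤ) - Ll * D) with ⟨h, _⟩ | ⟨h, _⟩
    · exact ⟨1, Or.inl rfl, by rw [hqbl, h]; ring⟩
    · exact ⟨-1, Or.inr rfl, by rw [hqbl, h]; ring⟩
  have hB : ∃ e₂ : ℤ, (e₂ = 1 ∨ e₂ = -1) ∧ qbm = e₂ * (m * (q₀ : ℤ) - Lm * D) := by
    rcases abs_cases (m * (q₀ : ℤ) - Lm * D) with ⟨h, _⟩ | ⟨h, _⟩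
    · exact ⟨1, Or.inl rfl, by rw [hqbm, h]; ring⟩
    · exact ⟨-1, Or.inr rfl, by rw [hqbm, h]; ring⟩
  obtain ⟨e₁, he₁, hqble⟩ := hA
  obtain ⟨e₂, he₂, hqbme⟩ := hB
  have hdvd : D ∣ q + (σ₁ * e₁) * (l * (q₀ : ℤ)) + (σ₂ * e₂) * (m * (q₀ : ℤ)) := by
    rcases hsum with h | h
    · refine ⟨σ₁ * e₁ * Ll + σ₂ * e₂ * Lm, ?_⟩
      rw [hqble, hqbme] at h
      linear_combination h
    · refine ⟨σ₁ * e₁ * Ll + σ₂ * e₂ * Lm + 1, ?_⟩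
      rw [hqble, hqbme] at h
      linear_combination h
  have hs : σ₁ * e₁ = 1 ∨ σ₁ * e₁ = -1 := by
    rcases hσ₁ with rfl | rfl <;> rcases he₁ with rfl | rfl <;> simp
  have ht : σ₂ * e₂ = 1 ∨ σ₂ * e₂ = -1 := by
    rcases hσ₂ with rfl | rfl <;> rcases he₂ with rfl | rfl <;> simp
  obtain ⟨ε, hε, hcase⟩ := key_sign D q (l * (q₀ : ℤ)) (m * (q₀ : ℤ)) _ _ hs ht hdvd
  have hcase' : D ∣ q - ε * (l + m) * (q₀ : ℤ) ∨ D ∣ q - ε * (l - m) * (q₀ : ℤ) := by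
    rcases hcase with h | h
    · exact Or.inl (by rw [show q - ε * (l + m) * (q₀ : ℤ)
        = q - ε * (l * (q₀ : ℤ) + m * (q₀ : ℤ)) by ring]; exact h)
    · exact Or.inr (by rw [show q - ε * (l - m) * (q₀ : ℤ)
        = q - ε * (l * (q₀ : ℤ) - m * (q₀ : ℤ)) by ring]; exact h)
  refine ⟨⟨ε, hε, hcase'⟩, ?_⟩
  have hDr : ((D : ℤ) : ℝ) = 2 * (N : ℝ) + 2 := by rw [hD]; push_cast; ring
  rcases hcase' with h | h
  · left
    have := abs_sin_eq_of_dvd D q ((l + m) * (q₀ : ℤ)) ε hε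
      (by rw [show q - ε * ((l + m) * (q₀ : ℤ)) = q - ε * (l + m) * (q₀ : ℤ) by ring]; exact h)
    rw [hDr] at this
    rw [this]
    push_cast
    ring_nf
  · right
    have := abs_sin_eq_of_dvd D q ((l - m) * (q₀ : ℤ)) ε hε
      (by rw [show q - ε * ((l - m) * (q₀ : ℤ)) = q - ε * (l - m) * (q₀ : ℤ) by ring]; exact h)
    rw [hDr] at this
    rw [this]
    push_cast
    ring_nf
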